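/- Let λ₁, λ₂ ∈ ℝ with λ₁² + λ₂² = 1, let x ≠ y be real numbers, and define Δ₀ = λ₁ Z₀(x) + λ₂ Z₀(y) where Z₀(z) = b_n^{−1/2}(K((z − X₀)/b_n) − E K((z − X₀)/b_n)), with X₀ having continuous density f, K a compactly supported continuous probability kernel with ∫K² < ∞, and b_n → 0. Then E(Δ₀²) → (λ₁² f(x) + λ₂² f(y)) ∫ K²(u) du as n → ∞. -/

import Mathlib

open MeasureTheory Filter
open scoped ProbabilityTheory NNReal ENNReal

private lemma aux_subst (h : ℝ → ℝ) (z c : ℝ) (hc : 0 < c) :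
    (∫ u, h ((z - u) / c)) = c * ∫ v, h v := by
  have e : (fun u => h ((z - u) / c)) = fun u => (fun w => h (w / c)) (z - u) := rfl
  rw [e, integral_sub_left_eq_self (fun w => h (w / c)) volume z,
    Measure.integral_comp_div (fun v => h v) c, abs_of_pos hc, smul_eq_mul]

private lemma aux_AI (f : ℝ → ℝ) (hf : Continuous f)
    (g : ℝ → ℝ) (hg : Continuous g) (hgs : HasCompactSupport g)
    (z : ℝ) (b : ℕ → ℝ) (hb0 : Tendsto b atTop (nhds 0)) :
    Tendsto (fun n => ∫ v, g v * f (z - b n * v)) atTop (nhds (f z * ∫ v, g v)) := by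
  obtain ⟨r, hr⟩ := hgs.isBounded.subset_closedBall 0
  set R : ℝ := max r 1 with hRdef
  have hR1 : (1:ℝ) ≤ R := le_max_right _ _
  have hRsupp : ∀ v, g v ≠ 0 → |v| ≤ R := by
    intro v hv
    have := hr (subset_tsupport g (by simpa [Function.mem_support] using hv))
    simp only [Metric.mem_closedBall, Real.dist_eq, sub_zero] at this
    exact this.trans (le_max_left _ _)
  obtain ⟨C, hC⟩ := (isCompact_Icc (a := z - R) (b := z + R)).exists_bound_of_continuousOn
    hf.continuousOn
  have hmain : Tendsto (fun n => ∫ v, g v * f (z - b n * v)) atTop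
      (nhds (∫ v, g v * f z)) := by
    apply tendsto_integral_filter_of_dominated_convergence (fun v => C * |g v|)
    · exact Eventually.of_forall fun n =>
        (hg.mul (hf.comp (continuous_const.sub (continuous_const.mul continuous_id)))).aestronglyMeasurable
    · have hev : ∀ᶠ n in atTop, |b n| ≤ 1 := by
        have := hb0.abs
        simp only [abs_zero] at this
        exact this.eventually_le_const (by norm_num : (0:ℝ) < 1)
      filter_upwards [hev] with n hn
      apply Eventually.of_forall
      intro v
      by_cases hv : g v = 0
      · simp [hv]
      · have hvR := hRsupp v hv
        have hmem : z - b n * v ∈ Set.Icc (z - R) (z + R) := by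
          have : |b n * v| ≤ R := by
            rw [abs_mul]
            calc |b n| * |v| ≤ 1 * R := mul_le_mul hn hvR (abs_nonneg _) zero_le_one
            _ = R := one_mul R
          rw [abs_le] at this
          constructor <;> simp <;> linarith [this.1, this.2]
        have := hC _ hmem
        rw [norm_mul]
        calc ‖g v‖ * ‖f (z - b n * v)‖ ≤ ‖g v‖ * C :=
            mul_le_mul_of_nonneg_left this (norm_nonneg _)
          _ = C * |g v| := by rw [Real.norm_eq_abs]; ring
    · exact ((hg.integrable_of_hasCompactSupport hgs).norm.const_mul C)
    · apply Eventually.of_forall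
      intro v
      exact tendsto_const_nhds.mul ((hf.tendsto z).comp (by
        have : Tendsto (fun n => z - b n * v) atTop (nhds (z - 0 * v)) :=
          tendsto_const_nhds.sub (hb0.mul_const v)
        simpa using this))
  have e2 : (∫ v, g v * f z) = f z * ∫ v, g v := by
    rw [integral_mul_const]; ring
  rwa [e2] at hmain

theorem variance_of_cramer_wold_combination
    {Ω : Type*} [MeasureSpace Ω] [IsProbabilityMeasure (ℙ : Measure Ω)]
    (X0 : Ω → ℝ) (hX0 : Measurable X0)
    (f : ℝ → ℝ) (hf : Continuous f) (hfnn : ∀ x, 0 ≤ f x)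
    (hdens : Measure.map X0 ℙ = (volume : Measure ℝ).withDensity fun x => ENNReal.ofReal (f x))
    (K : ℝ → ℝ) (hK : Continuous K) (hKsupp : HasCompactSupport K)
    (hKnn : ∀ x, 0 ≤ K x) (hK1 : ∫ u, K u = 1) (hK2 : Integrable fun u => (K u) ^ 2)
    (b : ℕ → ℝ) (hbpos : ∀ n, 0 < b n) (hb0 : Tendsto b atTop (nhds 0))
    (lam1 lam2 : ℝ) (hlam : lam1 ^ 2 + lam2 ^ 2 = 1)
    (x y : ℝ) (hxy : x ≠ y)
    (Z : ℕ → ℝ → Ω → ℝ)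
    (hZ : ∀ n z ω, Z n z ω = (1 / Real.sqrt (b n)) *
      (K ((z - X0 ω) / b n) - ∫ ω', K ((z - X0 ω') / b n))) :
    Tendsto (fun n => ∫ ω, (lam1 * Z n x ω + lam2 * Z n y ω) ^ 2) atTop
      (nhds ((lam1 ^ 2 * f x + lam2 ^ 2 * f y) * ∫ u, (K u) ^ 2)) := by
  -- pushforward formula
  have push : ∀ (φ : ℝ → ℝ), Continuous φ → (∫ ω, φ (X0 ω)) = ∫ u, φ u * f u := by
    intro φ hφ
    rw [← integral_map hX0.aemeasurable hφ.aestronglyMeasurable, hdens]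
    have e : (fun x => ENNReal.ofReal (f x)) = fun x => ((Real.toNNReal (f x) : ℝ≥0) : ℝ≥0∞) := rfl
    rw [e, integral_withDensity_eq_integral_smul (hf.measurable.real_toNNReal) φ]
    congr 1
    funext u
    rw [NNReal.smul_def, smul_eq_mul, Real.coe_toNNReal _ (hfnn u), mul_comm]
  -- compact-support helpers
  have hKcont : ∀ (z : ℝ) (n : ℕ), Continuous fun u : ℝ => K ((z - u) / b n) :=
    fun z n => hK.comp ((continuous_const.sub continuous_id).div_const _)
  -- squared moment as ℝ-integral
  have hsq : ∀ (n : ℕ) (z : ℝ), (∫ ω, (K ((z - X0 ω) / b n)) ^ 2)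
      = b n * ∫ v, (K v) ^ 2 * f (z - b n * v) := by
    intro n z
    have hb' : (b n) ≠ 0 := (hbpos n).ne'
    calc (∫ ω, (K ((z - X0 ω) / b n)) ^ 2)
        = ∫ u, (K ((z - u) / b n)) ^ 2 * f u :=
          push (fun u => (K ((z - u) / b n)) ^ 2) ((hKcont z n).pow 2)
      _ = ∫ u, (fun w => (K w) ^ 2 * f (z - b n * w)) ((z - u) / b n) := by
          congr 1; funext u
          simp only
          rw [show z - b n * ((z - u) / b n) = u by field_simp; ring]
      _ = b n * ∫ v, (K v) ^ 2 * f (z - b n * v) :=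
          aux_subst (fun w => (K w) ^ 2 * f (z - b n * w)) z (b n) (hbpos n)
  -- mean as ℝ-integral
  have hmean : ∀ (n : ℕ) (z : ℝ), (∫ ω, K ((z - X0 ω) / b n))
      = b n * ∫ v, K v * f (z - b n * v) := by
    intro n z
    have hb' : (b n) ≠ 0 := (hbpos n).ne'
    calc (∫ ω, K ((z - X0 ω) / b n))
        = ∫ u, K ((z - u) / b n) * f u := push (fun u => K ((z - u) / b n)) (hKcont z n)
      _ = ∫ u, (fun w => K w * f (z - b n * w)) ((z - u) / b n) := by
          congr 1; funext u
          simp only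
          rw [show z - b n * ((z - u) / b n) = u by field_simp; ring]
      _ = b n * ∫ v, K v * f (z - b n * v) :=
          aux_subst (fun w => K w * f (z - b n * w)) z (b n) (hbpos n)
  -- boundedness of K
  obtain ⟨C, hC⟩ := hKsupp.exists_bound_of_continuous hK
  have hC0 : 0 ≤ C := le_trans (norm_nonneg _) (hC 0)
  -- integrability of bounded measurable functions on Ω
  have intbd : ∀ (g : Ω → ℝ) (D : ℝ), Measurable g → (∀ ω, ‖g ω‖ ≤ D) →
      Integrable g (ℙ : Measure Ω) := by
    intro g D hg hbd
    exact (integrable_const D).mono' hg.aestronglyMeasurable (Eventually.of_forall hbd)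
  -- the key algebraic identity
  have key : ∀ n, (∫ ω, (lam1 * Z n x ω + lam2 * Z n y ω) ^ 2) =
      lam1 ^ 2 * ((∫ v, (K v) ^ 2 * f (x - b n * v)) - b n * (∫ v, K v * f (x - b n * v)) ^ 2)
      + lam2 ^ 2 * ((∫ v, (K v) ^ 2 * f (y - b n * v)) - b n * (∫ v, K v * f (y - b n * v)) ^ 2)
      + 2 * lam1 * lam2 * ((1 / b n) * (∫ ω, K ((x - X0 ω) / b n) * K ((y - X0 ω) / b n))
          - b n * (∫ v, K v * f (x - b n * v)) * (∫ v, K v * f (y - b n * v))) := by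
    intro n
    have hb' : (b n) ≠ 0 := (hbpos n).ne'
    have hs : Real.sqrt (b n) ^ 2 = b n := Real.sq_sqrt (hbpos n).le
    have hs0 : Real.sqrt (b n) ≠ 0 := ne_of_gt (Real.sqrt_pos.mpr (hbpos n))
    have hPm : Measurable fun ω => K ((x - X0 ω) / b n) :=
      hK.measurable.comp ((measurable_const.sub hX0).div_const _)
    have hQm : Measurable fun ω => K ((y - X0 ω) / b n) :=
      hK.measurable.comp ((measurable_const.sub hX0).div_const _)
    have hPi : Integrable (fun ω => K ((x - X0 ω) / b n)) (ℙ : Measure Ω) :=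
      intbd _ C hPm fun ω => hC _
    have hQi : Integrable (fun ω => K ((y - X0 ω) / b n)) (ℙ : Measure Ω) :=
      intbd _ C hQm fun ω => hC _
    have sqbd : ∀ t s : ℝ, ‖K t * K s‖ ≤ C * C := by
      intro t s
      rw [norm_mul]
      exact mul_le_mul (hC t) (hC s) (norm_nonneg _) hC0
    have hP2 : Integrable (fun ω => (K ((x - X0 ω) / b n)) ^ 2) (ℙ : Measure Ω) := by
      refine intbd _ (C * C) (hPm.pow_const 2) fun ω => ?_
      rw [sq]; exact sqbd _ _
    have hQ2 : Integrable (fun ω => (K ((y - X0 ω) / b n)) ^ 2) (ℙ : Measure Ω) := by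
      refine intbd _ (C * C) (hQm.pow_const 2) fun ω => ?_
      rw [sq]; exact sqbd _ _
    have hPQ : Integrable (fun ω => K ((x - X0 ω) / b n) * K ((y - X0 ω) / b n))
        (ℙ : Measure Ω) := intbd _ (C * C) (hPm.mul hQm) fun ω => sqbd _ _
    -- pointwise expansion
    have e1 : (fun ω => (lam1 * Z n x ω + lam2 * Z n y ω) ^ 2) =
        (fun ω => (1 / b n) *
          (lam1 ^ 2 * (K ((x - X0 ω) / b n)) ^ 2
           + lam2 ^ 2 * (K ((y - X0 ω) / b n)) ^ 2
           + (2 * lam1 * lam2) * (K ((x - X0 ω) / b n) * K ((y - X0 ω) / b n))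
           - (2 * lam1 * (lam1 * (∫ ω', K ((x - X0 ω') / b n))
                + lam2 * (∫ ω', K ((y - X0 ω') / b n)))) * (K ((x - X0 ω) / b n))
           - (2 * lam2 * (lam1 * (∫ ω', K ((x - X0 ω') / b n))
                + lam2 * (∫ ω', K ((y - X0 ω') / b n)))) * (K ((y - X0 ω) / b n))
           + (lam1 * (∫ ω', K ((x - X0 ω') / b n))
                + lam2 * (∫ ω', K ((y - X0 ω') / b n))) ^ 2)) := by
      funext ω
      rw [hZ n x ω, hZ n y ω]
      have hinv : (1 / Real.sqrt (b n)) ^ 2 = 1 / b n := by rw [div_pow, hs, one_pow]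
      linear_combination (lam1 * (K ((x - X0 ω) / b n) - ∫ ω', K ((x - X0 ω') / b n))
        + lam2 * (K ((y - X0 ω) / b n) - ∫ ω', K ((y - X0 ω') / b n))) ^ 2 * hinv
    rw [e1, integral_const_mul]
    have i1 : Integrable (fun ω => lam1 ^ 2 * (K ((x - X0 ω) / b n)) ^ 2) (ℙ : Measure Ω) :=
      hP2.const_mul _
    have i2 : Integrable (fun ω => lam2 ^ 2 * (K ((y - X0 ω) / b n)) ^ 2) (ℙ : Measure Ω) :=
      hQ2.const_mul _
    have i3 : Integrable (fun ω =>
        (2 * lam1 * lam2) * (K ((x - X0 ω) / b n) * K ((y - X0 ω) / b n))) (ℙ : Measure Ω) :=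
      hPQ.const_mul _
    have i4 : Integrable (fun ω =>
        (2 * lam1 * (lam1 * (∫ ω', K ((x - X0 ω') / b n))
            + lam2 * (∫ ω', K ((y - X0 ω') / b n)))) * (K ((x - X0 ω) / b n))) (ℙ : Measure Ω) :=
      hPi.const_mul _
    have i5 : Integrable (fun ω =>
        (2 * lam2 * (lam1 * (∫ ω', K ((x - X0 ω') / b n))
            + lam2 * (∫ ω', K ((y - X0 ω') / b n)))) * (K ((y - X0 ω) / b n))) (ℙ : Measure Ω) :=
      hQi.const_mul _
    have i12 : Integrable (fun ω => lam1 ^ 2 * (K ((x - X0 ω) / b n)) ^ 2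
        + lam2 ^ 2 * (K ((y - X0 ω) / b n)) ^ 2) (ℙ : Measure Ω) := i1.add i2
    have i123 : Integrable (fun ω => lam1 ^ 2 * (K ((x - X0 ω) / b n)) ^ 2
        + lam2 ^ 2 * (K ((y - X0 ω) / b n)) ^ 2
        + (2 * lam1 * lam2) * (K ((x - X0 ω) / b n) * K ((y - X0 ω) / b n))) (ℙ : Measure Ω) :=
      i12.add i3
    have i1234 : Integrable (fun ω => lam1 ^ 2 * (K ((x - X0 ω) / b n)) ^ 2
        + lam2 ^ 2 * (K ((y - X0 ω) / b n)) ^ 2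
        + (2 * lam1 * lam2) * (K ((x - X0 ω) / b n) * K ((y - X0 ω) / b n))
        - (2 * lam1 * (lam1 * (∫ ω', K ((x - X0 ω') / b n))
            + lam2 * (∫ ω', K ((y - X0 ω') / b n)))) * (K ((x - X0 ω) / b n))) (ℙ : Measure Ω) :=
      i123.sub i4
    have i12345 : Integrable (fun ω => lam1 ^ 2 * (K ((x - X0 ω) / b n)) ^ 2
        + lam2 ^ 2 * (K ((y - X0 ω) / b n)) ^ 2
        + (2 * lam1 * lam2) * (K ((x - X0 ω) / b n) * K ((y - X0 ω) / b n))
        - (2 * lam1 * (lam1 * (∫ ω', K ((x - X0 ω') / b n))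
            + lam2 * (∫ ω', K ((y - X0 ω') / b n)))) * (K ((x - X0 ω) / b n))
        - (2 * lam2 * (lam1 * (∫ ω', K ((x - X0 ω') / b n))
            + lam2 * (∫ ω', K ((y - X0 ω') / b n)))) * (K ((y - X0 ω) / b n))) (ℙ : Measure Ω) :=
      i1234.sub i5
    rw [integral_add i12345 (integrable_const _),
      integral_sub i1234 i5,
      integral_sub i123 i4,
      integral_add i12 i3,
      integral_add i1 i2,
      integral_const_mul, integral_const_mul, integral_const_mul, integral_const_mul,
      integral_const_mul, integral_const]
    rw [hsq n x, hsq n y, hmean n x, hmean n y]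
    simp only [probReal_univ, one_smul]
    field_simp
    ring
  -- limits
  have hK2supp : HasCompactSupport fun v => (K v) ^ 2 :=
    hKsupp.comp_left (g := fun t : ℝ => t ^ 2) (by norm_num)
  have hAx : Tendsto (fun n => ∫ v, (K v) ^ 2 * f (x - b n * v)) atTop
      (nhds (f x * ∫ u, (K u) ^ 2)) := aux_AI f hf _ (hK.pow 2) hK2supp x b hb0
  have hAy : Tendsto (fun n => ∫ v, (K v) ^ 2 * f (y - b n * v)) atTop
      (nhds (f y * ∫ u, (K u) ^ 2)) := aux_AI f hf _ (hK.pow 2) hK2supp y b hb0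
  have hax : Tendsto (fun n => ∫ v, K v * f (x - b n * v)) atTop (nhds (f x * 1)) := by
    have := aux_AI f hf K hK hKsupp x b hb0
    rwa [hK1] at this
  have hay : Tendsto (fun n => ∫ v, K v * f (y - b n * v)) atTop (nhds (f y * 1)) := by
    have := aux_AI f hf K hK hKsupp y b hb0
    rwa [hK1] at this
  -- cross term eventually zero
  have hcross : ∀ᶠ n in atTop,
      (∫ ω, K ((x - X0 ω) / b n) * K ((y - X0 ω) / b n)) = 0 := by
    obtain ⟨r, hr⟩ := hKsupp.isBounded.subset_closedBall 0
    set R : ℝ := max r 1 with hRdef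
    have hR0 : (0:ℝ) < R := lt_of_lt_of_le one_pos (le_max_right _ _)
    have hRsupp : ∀ v, K v ≠ 0 → |v| ≤ R := by
      intro v hv
      have := hr (subset_tsupport K (by simpa [Function.mem_support] using hv))
      simp only [Metric.mem_closedBall, Real.dist_eq, sub_zero] at this
      exact this.trans (le_max_left _ _)
    have hd0 : (0:ℝ) < |x - y| / (2 * R) := by
      apply div_pos _ (by linarith)
      simpa [sub_eq_zero] using hxy
    have hev : ∀ᶠ n in atTop, b n < |x - y| / (2 * R) := by
      have := hb0.eventually_lt_const hd0
      exact this
    filter_upwards [hev] with n hn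
    have hz : ∀ ω, K ((x - X0 ω) / b n) * K ((y - X0 ω) / b n) = 0 := by
      intro ω
      by_contra h
      obtain ⟨h1, h2⟩ := mul_ne_zero_iff.mp h
      have e1 : |x - X0 ω| ≤ R * b n := by
        have := hRsupp _ h1
        rw [abs_div, abs_of_pos (hbpos n), div_le_iff₀ (hbpos n)] at this
        linarith [this]
      have e2 : |y - X0 ω| ≤ R * b n := by
        have := hRsupp _ h2
        rw [abs_div, abs_of_pos (hbpos n), div_le_iff₀ (hbpos n)] at this
        linarith [this]
      have e3 : |x - y| ≤ 2 * R * b n := by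
        calc |x - y| = |(x - X0 ω) - (y - X0 ω)| := by ring_nf
          _ ≤ |x - X0 ω| + |y - X0 ω| := abs_sub _ _
          _ ≤ 2 * R * b n := by linarith
      rw [lt_div_iff₀ (by linarith : (0:ℝ) < 2 * R)] at hn
      nlinarith
    calc (∫ ω, K ((x - X0 ω) / b n) * K ((y - X0 ω) / b n))
        = ∫ ω : Ω, (0:ℝ) := by congr 1; funext ω; exact hz ω
      _ = 0 := integral_zero _ _
  -- assemble
  have hcr : Tendsto (fun n => (1 / b n) * (∫ ω, K ((x - X0 ω) / b n) * K ((y - X0 ω) / b n))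
      - b n * (∫ v, K v * f (x - b n * v)) * (∫ v, K v * f (y - b n * v))) atTop (nhds 0) := by
    have h2 : Tendsto (fun n => (0:ℝ) - b n * (∫ v, K v * f (x - b n * v))
        * (∫ v, K v * f (y - b n * v))) atTop (nhds (0 - 0 * (f x * 1) * (f y * 1))) :=
      tendsto_const_nhds.sub ((hb0.mul hax).mul hay)
    have heq : (fun n => (0:ℝ) - b n * (∫ v, K v * f (x - b n * v))
        * (∫ v, K v * f (y - b n * v))) =ᶠ[atTop]
        (fun n => (1 / b n) * (∫ ω, K ((x - X0 ω) / b n) * K ((y - X0 ω) / b n))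
          - b n * (∫ v, K v * f (x - b n * v)) * (∫ v, K v * f (y - b n * v))) := by
      filter_upwards [hcross] with n hn
      rw [hn, mul_zero]
    have := h2.congr' heq
    simpa using this
  have hmain : Tendsto (fun n =>
      lam1 ^ 2 * ((∫ v, (K v) ^ 2 * f (x - b n * v)) - b n * (∫ v, K v * f (x - b n * v)) ^ 2)
      + lam2 ^ 2 * ((∫ v, (K v) ^ 2 * f (y - b n * v)) - b n * (∫ v, K v * f (y - b n * v)) ^ 2)
      + 2 * lam1 * lam2 * ((1 / b n) * (∫ ω, K ((x - X0 ω) / b n) * K ((y - X0 ω) / b n))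
          - b n * (∫ v, K v * f (x - b n * v)) * (∫ v, K v * f (y - b n * v)))) atTop
      (nhds (lam1 ^ 2 * ((f x * ∫ u, (K u) ^ 2) - 0 * (f x * 1) ^ 2)
        + lam2 ^ 2 * ((f y * ∫ u, (K u) ^ 2) - 0 * (f y * 1) ^ 2)
        + 2 * lam1 * lam2 * 0)) :=
    ((tendsto_const_nhds.mul (hAx.sub (hb0.mul (hax.pow 2)))).add
      (tendsto_const_nhds.mul (hAy.sub (hb0.mul (hay.pow 2))))).add
      (tendsto_const_nhds.mul hcr)
  have hfin := hmain.congr (fun n => (key n).symm)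
  convert hfin using 2
  ring
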